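/- Let n ≥ 1, let a₁, …, aₙ > 0, let E = {x ∈ ℝⁿ : Σᵢ xᵢ²/aᵢ² ≤ 1}, and let 0 ≤ ρ ≤ min_i aᵢ/√n. Then the volume of the ρ-neighborhood of the boundary ∂E satisfies vol({x ∈ ℝⁿ : dist(x, ∂E) ≤ ρ}) ≤ 2ⁿ · [∏ᵢ (aᵢ + ρ) − ∏ᵢ (aᵢ/√n − ρ)]. -/

import Mathlib

open MeasureTheory Set Metric

lemma coord_dist_le {n : ℕ} (x y : EuclideanSpace ℝ (Fin n)) (i : Fin n) :
    |x i - y i| ≤ dist x y := by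
  have h1 : dist (x i) (y i) ≤ dist x y := by
    rw [EuclideanSpace.dist_eq,
      show dist (x i) (y i) = Real.sqrt (dist (x i) (y i) ^ 2) by rw [Real.sqrt_sq dist_nonneg]]
    exact Real.sqrt_le_sqrt (Finset.single_le_sum
      (f := fun j => dist (x j) (y j) ^ 2) (fun j _ => sq_nonneg _) (Finset.mem_univ i))
  simpa [Real.dist_eq] using h1

theorem ellipsoid_boundary_neighborhood_volume (n : ℕ) (hn : 1 ≤ n)
    (a : Fin n → ℝ) (ha : ∀ i, 0 < a i) (ρ : ℝ) (hρ : 0 ≤ ρ)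
    (hρ' : ∀ i, ρ ≤ a i / Real.sqrt n) :
    volume {x : EuclideanSpace ℝ (Fin n) |
        Metric.infDist x
          (frontier {y : EuclideanSpace ℝ (Fin n) | ∑ i, (y i) ^ 2 / (a i) ^ 2 ≤ 1}) ≤ ρ}
      ≤ ENNReal.ofReal
          ((2 : ℝ) ^ n * (∏ i, (a i + ρ) - ∏ i, (a i / Real.sqrt n - ρ))) := by
  classical
  have hn0 : (1:ℝ) ≤ Real.sqrt n := by
    rw [show (1:ℝ) = Real.sqrt 1 by simp]
    exact Real.sqrt_le_sqrt (by exact_mod_cast hn)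
  have hsq : (0:ℝ) < Real.sqrt n := lt_of_lt_of_le one_pos hn0
  set E : Set (EuclideanSpace ℝ (Fin n)) := {y | ∑ i, (y i) ^ 2 / (a i) ^ 2 ≤ 1} with hE
  have hcont : Continuous (fun y : EuclideanSpace ℝ (Fin n) => ∑ i, (y i) ^ 2 / (a i) ^ 2) :=
    continuous_finset_sum _ fun i _ => ((EuclideanSpace.proj i).continuous.pow 2).div_const _
  have hEclosed : IsClosed E := isClosed_le hcont continuous_const
  have hfr_eq : frontier E ⊆ {y | ∑ i, (y i) ^ 2 / (a i) ^ 2 = 1} :=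
    frontier_le_subset_eq hcont continuous_const
  have hfr_E : frontier E ⊆ E := by
    exact hEclosed.frontier_subset
  -- frontier is nonempty
  have hne : (frontier E).Nonempty := by
    rw [Set.nonempty_iff_ne_empty]
    intro h
    rcases isClopen_iff.1 (isClopen_iff_frontier_eq_empty.2 h) with h0 | h1
    · have h00 : (0 : EuclideanSpace ℝ (Fin n)) ∈ E := by
        simp [hE]
      rw [h0] at h00; exact h00
    · set i0 : Fin n := ⟨0, hn⟩
      have hmem : (EuclideanSpace.single i0 (2 * a i0) : EuclideanSpace ℝ (Fin n)) ∈ E :=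
        h1 ▸ mem_univ _
      have : ∑ i, (EuclideanSpace.single i0 (2 * a i0) i : ℝ) ^ 2 / (a i) ^ 2
          = (2 * a i0) ^ 2 / (a i0) ^ 2 := by
        rw [Finset.sum_eq_single i0]
        · simp [EuclideanSpace.single_apply]
        · intro j _ hj
          simp [EuclideanSpace.single_apply, hj]
        · simp
      have h4 : (2 * a i0) ^ 2 / (a i0) ^ 2 ≤ 1 := by
        rw [← this]; exact hmem
      have hpos := ha i0
      rw [div_le_one (by positivity)] at h4
      nlinarith
  -- coordinate bounds for points of E
  have habs : ∀ y ∈ E, ∀ i, |y i| ≤ a i := by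
    intro y hy i
    have hterm : (y i) ^ 2 / (a i) ^ 2 ≤ 1 := by
      refine le_trans (Finset.single_le_sum (f := fun j => (y j) ^ 2 / (a j) ^ 2)
        (fun j _ => by positivity) (Finset.mem_univ i)) hy
    have hsq' : (y i) ^ 2 ≤ (a i) ^ 2 := by
      have := (ha i); rw [div_le_one (by positivity)] at hterm; exact hterm
    calc |y i| = Real.sqrt ((y i) ^ 2) := (Real.sqrt_sq_eq_abs _).symm
    _ ≤ Real.sqrt ((a i) ^ 2) := Real.sqrt_le_sqrt hsq'
    _ = a i := Real.sqrt_sq (ha i).le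
  obtain ⟨b, hb⟩ : ∃ b : Fin n → ℝ, b = fun i => a i / Real.sqrt n - ρ := ⟨_, rfl⟩
  have hbi : ∀ i, b i = a i / Real.sqrt n - ρ := fun i => by rw [hb]
  have hb0 : ∀ i, 0 ≤ b i := fun i => by rw [hbi i]; exact sub_nonneg.2 (hρ' i)
  -- frontier is compact
  have hbd : frontier E ⊆ Metric.closedBall 0 (Real.sqrt (∑ i, (a i) ^ 2)) := by
    intro y hy
    rw [mem_closedBall_zero_iff, EuclideanSpace.norm_eq]
    refine Real.sqrt_le_sqrt (Finset.sum_le_sum fun i _ => ?_)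
    have := habs y (hfr_E hy) i
    have hai := (ha i).le
    calc ‖y i‖ ^ 2 = |y i| ^ 2 := by rw [Real.norm_eq_abs]
    _ ≤ (a i) ^ 2 := by nlinarith [abs_nonneg (y i)]
  have hFc : IsCompact (frontier E) :=
    (isCompact_closedBall 0 _).of_isClosed_subset isClosed_frontier hbd
  -- the key inclusion
  have hsub : {x : EuclideanSpace ℝ (Fin n) | Metric.infDist x (frontier E) ≤ ρ} ⊆
      (MeasurableEquiv.toLp 2 (Fin n → ℝ)).symm ⁻¹'
        ((Set.pi univ fun i => Icc (-(a i + ρ)) (a i + ρ)) \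
          (Set.pi univ fun i => Ioo (-(b i)) (b i))) := by
    intro x hx
    obtain ⟨y, hyF, hxy⟩ := hFc.exists_infDist_eq_dist hne x
    have hdist : dist x y ≤ ρ := by rw [← hxy]; exact hx
    have hyE : y ∈ E := hfr_E hyF
    constructor
    · intro i _
      have h1 : |y i| ≤ a i := habs y hyE i
      have h2 : |x i - y i| ≤ ρ := le_trans (coord_dist_le x y i) hdist
      have e : (MeasurableEquiv.toLp 2 (Fin n → ℝ)).symm x i = x i := rfl
      rw [e, Set.mem_Icc]
      obtain ⟨h1a, h1b⟩ := abs_le.1 h1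
      obtain ⟨h2a, h2b⟩ := abs_le.1 h2
      constructor <;> linarith
    · intro hmem
      have hlt : ∀ i, |x i| < b i := by
        intro i
        have e : (MeasurableEquiv.toLp 2 (Fin n → ℝ)).symm x i = x i := rfl
        have := hmem i (mem_univ i)
        rw [e, mem_Ioo] at this
        exact abs_lt.2 ⟨by linarith [this.1], this.2⟩
      have hylt : ∀ i, (y i) ^ 2 / (a i) ^ 2 < 1 / n := by
        intro i
        have h2 : |x i - y i| ≤ ρ := le_trans (coord_dist_le x y i) hdist
        have h3 : |y i| < a i / Real.sqrt n := by
          have hx' := hlt i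
          have htri : |y i| - |x i| ≤ |x i - y i| := by
            have := abs_sub_abs_le_abs_sub (y i) (x i)
            rwa [abs_sub_comm] at this
          have := hbi i
          linarith
        have h4 : (y i) ^ 2 < (a i / Real.sqrt n) ^ 2 := by
          have h0 : (0:ℝ) ≤ |y i| := abs_nonneg _
          nlinarith [sq_abs (y i)]
        have hns : (Real.sqrt n) ^ 2 = (n:ℝ) := Real.sq_sqrt (Nat.cast_nonneg n)
        have han : (0:ℝ) < (n:ℝ) := by exact_mod_cast hn
        rw [div_pow, hns] at h4
        rw [div_lt_div_iff₀ (pow_pos (ha i) 2) han, one_mul]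
        have := (lt_div_iff₀ han).1 h4
        linarith
      have hsum : ∑ i, (y i) ^ 2 / (a i) ^ 2 < 1 := by
        have : ∑ i, (y i) ^ 2 / (a i) ^ 2 < ∑ _i : Fin n, (1:ℝ) / n :=
          Finset.sum_lt_sum_of_nonempty (Finset.univ_nonempty_iff.2
            ⟨⟨0, hn⟩⟩) (fun i _ => hylt i)
        simpa [Finset.sum_const, Finset.card_univ, mul_one_div,
          mul_inv_cancel₀ (show (n:ℝ) ≠ 0 by positivity)] using this
      have := hfr_eq hyF
      simp only [mem_setOf_eq] at this
      linarith
  -- measure computation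
  have hBsub : (Set.pi univ fun i => Ioo (-(b i)) (b i)) ⊆
      (Set.pi univ fun i : Fin n => Icc (-(a i + ρ)) (a i + ρ)) := by
    refine Set.pi_mono fun i _ => ?_
    have hba : b i ≤ a i + ρ := by
      have h1 : a i / Real.sqrt n ≤ a i := by
        rw [div_le_iff₀ hsq]
        nlinarith [(ha i).le]
      rw [hbi i]; linarith
    exact Ioo_subset_Icc_self.trans (Icc_subset_Icc (by linarith) hba)
  have hmA : MeasurableSet (Set.pi univ fun i : Fin n => Icc (-(a i + ρ)) (a i + ρ)) :=
    MeasurableSet.univ_pi fun i => measurableSet_Icc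
  have hmB : MeasurableSet (Set.pi univ fun i : Fin n => Ioo (-(b i)) (b i)) :=
    MeasurableSet.univ_pi fun i => measurableSet_Ioo
  have hvolB : volume (Set.pi univ fun i : Fin n => Ioo (-(b i)) (b i))
      = ENNReal.ofReal (∏ i, (2 * b i)) := by
    rw [volume_pi_pi]
    have hv : ∀ i : Fin n, volume (Ioo (-(b i)) (b i)) = ENNReal.ofReal (2 * b i) := by
      intro i; rw [Real.volume_Ioo]; congr 1; ring
    rw [Finset.prod_congr rfl fun i _ => hv i,
      ← ENNReal.ofReal_prod_of_nonneg (fun i _ => by linarith [hb0 i])]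
  have hvolA : volume (Set.pi univ fun i : Fin n => Icc (-(a i + ρ)) (a i + ρ))
      = ENNReal.ofReal (∏ i, (2 * (a i + ρ))) := by
    rw [volume_pi_pi]
    have hv : ∀ i : Fin n, volume (Icc (-(a i + ρ)) (a i + ρ)) = ENNReal.ofReal (2 * (a i + ρ)) := by
      intro i; rw [Real.volume_Icc]; congr 1; ring
    rw [Finset.prod_congr rfl fun i _ => hv i,
      ← ENNReal.ofReal_prod_of_nonneg (fun i _ => by nlinarith [(ha i).le])]
  calc volume {x : EuclideanSpace ℝ (Fin n) | Metric.infDist x (frontier E) ≤ ρ}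
      ≤ volume ((MeasurableEquiv.toLp 2 (Fin n → ℝ)).symm ⁻¹'
        ((Set.pi univ fun i => Icc (-(a i + ρ)) (a i + ρ)) \
          (Set.pi univ fun i => Ioo (-(b i)) (b i)))) := measure_mono hsub
  _ = volume ((Set.pi univ fun i : Fin n => Icc (-(a i + ρ)) (a i + ρ)) \
          (Set.pi univ fun i => Ioo (-(b i)) (b i))) :=
      (EuclideanSpace.volume_preserving_symm_measurableEquiv_toLp (Fin n)).measure_preimage
        (hmA.diff hmB).nullMeasurableSet
  _ = volume (Set.pi univ fun i : Fin n => Icc (-(a i + ρ)) (a i + ρ))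
        - volume (Set.pi univ fun i : Fin n => Ioo (-(b i)) (b i)) := by
      rw [measure_diff hBsub hmB.nullMeasurableSet]
      rw [hvolB]; exact ENNReal.ofReal_ne_top
  _ = ENNReal.ofReal (∏ i, (2 * (a i + ρ)) - ∏ i, (2 * b i)) := by
      rw [hvolA, hvolB, ENNReal.ofReal_sub _ (Finset.prod_nonneg fun i _ => by linarith [hb0 i])]
  _ = ENNReal.ofReal ((2 : ℝ) ^ n * (∏ i, (a i + ρ) - ∏ i, (a i / Real.sqrt n - ρ))) := by
      congr 1
      rw [Finset.prod_mul_distrib, Finset.prod_mul_distrib, Finset.prod_const,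
        Finset.card_univ, Fintype.card_fin, mul_sub, hb]
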